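/- arXiv:2006.16971 — 6 statements merged into one kernel-verified Lean document; each statement's English description precedes it below -/
import Mathlib

section
/- Let X be an integrable real random variable on a probability space taking values almost surely in a compact interval [a,b] with a < b, and let f : ℝ → ℝ be twice continuously differentiable on [a,b]. If there are constants with 0 ≤ m ≤ M such that −M ≤ f''(x) ≤ −m for all x ∈ [a,b] (so f is concave on [a,b]), then the Jensen defect is bounded by the variance of X: f(E[X]) − E[f(X)] ≤ (1/2)·M·Var[X]. -/
open MeasureTheory ProbabilityTheory Real Set

/-- Hölder's defect formula for concave functions, in probabilistic notation:
if `X` is an integrable random variable taking values a.s. in `[a, b]`,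
and `f` is twice continuously differentiable on `[a, b]` with
`-M ≤ f'' ≤ -m ≤ 0` on `[a, b]`, then the Jensen defect satisfies
`f (E[X]) - E[f X] ≤ (1/2) * M * Var[X]`. -/
theorem holder_defect_formula
    {Ω : Type*} [MeasureSpace Ω] [IsProbabilityMeasure (ℙ : Measure Ω)]
    (X : Ω → ℝ) (hX : Integrable X ℙ)
    (a b : ℝ) (hab : a < b)
    (hrange : ∀ᵐ ω ∂(ℙ : Measure Ω), X ω ∈ Icc a b)
    (f : ℝ → ℝ) (hf : ContDiffOn ℝ 2 f (Icc a b))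
    (m M : ℝ) (hm : 0 ≤ m) (hmM : m ≤ M)
    (hf'' : ∀ x ∈ Icc a b,
      -M ≤ iteratedDerivWithin 2 f (Icc a b) x ∧
      iteratedDerivWithin 2 f (Icc a b) x ≤ -m) :
    f (∫ ω, X ω) - ∫ ω, f (X ω) ≤ (1 / 2) * M * variance X ℙ := by
  set s : Set ℝ := Icc a b with hs_def
  have hs : UniqueDiffOn ℝ s := uniqueDiffOn_Icc hab
  set μ : ℝ := ∫ ω, X ω with hμ_def
  -- mean is in [a, b]
  have hμmem : μ ∈ s := by
    constructor
    · have := integral_mono_ae (integrable_const a) hX (hrange.mono fun ω h => h.1)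
      simpa using this
    · have := integral_mono_ae hX (integrable_const b) (hrange.mono fun ω h => h.2)
      simpa using this
  -- integrability facts
  have hX2 : MemLp X 2 ℙ := memLp_of_bounded hrange hX.aestronglyMeasurable 2
  have hsq_int : Integrable (fun ω => (X ω - μ) ^ 2) ℙ := by
    have := (hX2.sub (memLp_const μ)).integrable_sq
    simpa using this
  have hcf : ContinuousOn f s := hf.continuousOn
  have hfX_int : Integrable (fun ω => f (X ω)) ℙ := by
    set F : ℝ → ℝ := IccExtend hab.le (s.restrict f) with hF_def
    have hFc : Continuous F := (continuousOn_iff_continuous_restrict.1 hcf).Icc_extend'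
    have hae : ∀ᵐ ω ∂(ℙ : Measure Ω), F (X ω) = f (X ω) := by
      filter_upwards [hrange] with ω h
      simp [hF_def, IccExtend_of_mem hab.le _ h]
      rfl
    obtain ⟨C, hC⟩ := isCompact_Icc.exists_bound_of_continuousOn hcf
    refine Integrable.mono' (integrable_const C)
      ((hFc.comp_aestronglyMeasurable hX.aestronglyMeasurable).congr hae) ?_
    filter_upwards [hrange] with ω h
    exact hC _ h
  -- the convex auxiliary function
  set g : ℝ → ℝ := fun x => f x + M / 2 * (x - μ) ^ 2 with hg_def
  have hcg : ContinuousOn g s := by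
    apply hcf.add
    exact (continuous_const.mul ((continuous_id.sub continuous_const).pow 2)).continuousOn
  have hgX_int : Integrable (fun ω => g (X ω)) ℙ := by
    exact hfX_int.add (hsq_int.const_mul (M / 2))
  -- convexity of g on s
  have hconv : ConvexOn ℝ s g := by
    apply convexOn_of_hasDerivWithinAt2_nonneg (convex_Icc a b) hcg
      (f' := fun x => derivWithin f s x + M * (x - μ))
      (f'' := fun x => iteratedDerivWithin 2 f s x + M)
    · intro x hx
      have hxs : x ∈ s := interior_subset hx
      have h1 : HasDerivWithinAt f (derivWithin f s x) s x :=
        ((hf.differentiableOn (by norm_num)) x hxs).hasDerivWithinAt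
      have h2 : HasDerivAt (fun x : ℝ => M / 2 * (x - μ) ^ 2) (M * (x - μ)) x := by
        have := (((hasDerivAt_id x).sub_const μ).pow 2).const_mul (M / 2)
        refine this.congr_deriv ?_
        simp
        ring
      exact ((h1.add (h2.hasDerivWithinAt)).mono interior_subset)
    · intro x hx
      have hxs : x ∈ s := interior_subset hx
      have hd1 : DifferentiableOn ℝ (derivWithin f s) s :=
        (hf.derivWithin (m := 1) hs (by norm_num)).differentiableOn one_ne_zero
      have h1 : HasDerivWithinAt (derivWithin f s) (derivWithin (derivWithin f s) s x) s x :=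
        (hd1 x hxs).hasDerivWithinAt
      have heq : iteratedDerivWithin 2 f s x = derivWithin (derivWithin f s) s x := by
        rw [iteratedDerivWithin_succ]
        refine derivWithin_congr (fun y hy => ?_) ?_
        · exact congrFun iteratedDerivWithin_one y
        · exact congrFun iteratedDerivWithin_one x
      have h2 : HasDerivAt (fun x : ℝ => M * (x - μ)) M x := by
        have := ((hasDerivAt_id x).sub_const μ).const_mul M
        simpa using this
      have := h1.add h2.hasDerivWithinAt
      rw [← heq] at this
      exact this.mono interior_subset
    · intro x hx
      have := (hf'' x (interior_subset hx)).1
      linarith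
  -- Jensen's inequality
  have hjen : g μ ≤ ∫ ω, g (X ω) := by
    have := hconv.map_integral_le hcg isClosed_Icc hrange hX hgX_int
    simpa [Function.comp] using this
  have hgμ : g μ = f μ := by simp [hg_def]
  have hint : ∫ ω, g (X ω) = (∫ ω, f (X ω)) + M / 2 * ∫ ω, (X ω - μ) ^ 2 := by
    rw [hg_def]
    simp only []
    rw [integral_add hfX_int (hsq_int.const_mul (M / 2)), integral_const_mul]
  have hvar : variance X ℙ = ∫ ω, (X ω - μ) ^ 2 := by
    rw [variance_eq_integral hX.aemeasurable]
  rw [hgμ, hint] at hjen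
  rw [hvar]
  linarith
end

section
/- Assume E[σ̂_t²] = ((n−1)/n)·σ_t², Var[σ̂_t²] = (2(n−1)/n²)·σ_t⁴, and σ̂_t² ≥ q·σ_t²/n almost surely for some real q > 0. Set a = (N/(N+n))·σ_s² + (q/(N+n))·σ_t². Then the expectation of σ̄ = √(σ̄²) satisfies the two-sided bound: √((N/(N+n))·σ_s² + ((n−1)/(N+n))·σ_t²) − ((n−1)/(4·(N+n)²))·σ_t⁴·a^(−3/2) ≤ E[σ̄] ≤ √((N/(N+n))·σ_s² + ((n−1)/(N+n))·σ_t²). -/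
open MeasureTheory ProbabilityTheory Real

lemma sqrt_le_tangent (m y : ℝ) (hm : 0 < m) (hy : 0 ≤ y) :
    Real.sqrt y ≤ Real.sqrt m + (y - m) / (2 * Real.sqrt m) := by
  have hsm : 0 < Real.sqrt m := Real.sqrt_pos.2 hm
  rw [← sub_le_iff_le_add', le_div_iff₀ (by positivity)]
  nlinarith [sq_nonneg (Real.sqrt y - Real.sqrt m), Real.sq_sqrt hm.le, Real.sq_sqrt hy,
    Real.sqrt_nonneg y]

lemma tangent_sub_le_sqrt (a m y : ℝ) (ha : 0 < a) (ham : a ≤ m) (hay : a ≤ y) :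
    Real.sqrt m + (y - m) / (2 * Real.sqrt m) - (y - m) ^ 2 / (8 * (a * Real.sqrt a))
      ≤ Real.sqrt y := by
  have hw : 0 < Real.sqrt a := Real.sqrt_pos.2 ha
  have hv : Real.sqrt a ≤ Real.sqrt m := Real.sqrt_le_sqrt ham
  have hu : Real.sqrt a ≤ Real.sqrt y := Real.sqrt_le_sqrt hay
  have hm2 : Real.sqrt m ^ 2 = m := Real.sq_sqrt (ha.le.trans ham)
  have hy2 : Real.sqrt y ^ 2 = y := Real.sq_sqrt (ha.le.trans hay)
  have ha2 : Real.sqrt a ^ 2 = a := Real.sq_sqrt ha.le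
  set u := Real.sqrt y
  set v := Real.sqrt m
  set w := Real.sqrt a
  have hvpos : 0 < v := lt_of_lt_of_le hw hv
  have key : 4 * w ^ 3 ≤ v * (u + v) ^ 2 := by nlinarith [sq_nonneg (u + v - 2 * w), hw, hv, hu]
  have key2 : (u - v) ^ 2 * (4 * w ^ 3) ≤ (u - v) ^ 2 * (v * (u + v) ^ 2) :=
    mul_le_mul_of_nonneg_left key (sq_nonneg _)
  have expand : (y - m) = (u - v) * (u + v) := by rw [← hy2, ← hm2]; ring
  have e2 : v + (y - m) / (2 * v) - u = (u - v) ^ 2 / (2 * v) := by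
    rw [expand]; field_simp; ring
  have e3 : (u - v) ^ 2 / (2 * v) ≤ (y - m) ^ 2 / (8 * (a * w)) := by
    rw [expand, div_le_div_iff₀ (by positivity) (by positivity), ← ha2]
    nlinarith [key2]
  linarith [e2, e3]

/-- Lemma 3 of the paper: two-sided bound on the expectation of
`σ̄ = √(σ̄²)` where `σ̄² = (N/(N+n))·σ_s² + (n/(N+n))·σ̂_t²`,
given the moments of the sample variance `σ̂_t²` and an almost-sure
lower bound `σ̂_t² ≥ q·σ_t²/n` (the confidence event). -/
theorem expectation_sqrt_mixed_variance_bounds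
    {Ω : Type*} [MeasureSpace Ω] [IsProbabilityMeasure (ℙ : Measure Ω)]
    (σs σt N q : ℝ) (n : ℕ)
    (hσs : 0 < σs) (hσt : 0 < σt) (hn : 2 ≤ n) (hN : 0 ≤ N) (hq : 0 < q)
    (σt2hat : Ω → ℝ)
    (hint : Integrable σt2hat ℙ) (hL2 : MemLp σt2hat 2 ℙ)
    (hmean : ∫ ω, σt2hat ω = (((n : ℝ) - 1) / n) * σt ^ 2)
    (hvar : variance σt2hat ℙ = (2 * ((n : ℝ) - 1) / (n : ℝ) ^ 2) * σt ^ 4)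
    (hlb : ∀ᵐ ω ∂(ℙ : Measure Ω), q * σt ^ 2 / n ≤ σt2hat ω) :
    Real.sqrt (N / (N + n) * σs ^ 2 + ((n : ℝ) - 1) / (N + n) * σt ^ 2)
      - ((n : ℝ) - 1) / (4 * (N + n) ^ 2) * σt ^ 4
        * (N / (N + n) * σs ^ 2 + q / (N + n) * σt ^ 2) ^ (-(3 : ℝ) / 2)
      ≤ ∫ ω, Real.sqrt (N / (N + n) * σs ^ 2 + (n : ℝ) / (N + n) * σt2hat ω)
    ∧ ∫ ω, Real.sqrt (N / (N + n) * σs ^ 2 + (n : ℝ) / (N + n) * σt2hat ω)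
      ≤ Real.sqrt (N / (N + n) * σs ^ 2 + ((n : ℝ) - 1) / (N + n) * σt ^ 2) := by
  have hn0 : (0:ℝ) < n := by exact_mod_cast lt_of_lt_of_le two_pos hn
  have hNn : (0:ℝ) < N + n := by linarith
  set c : ℝ := N / (N + n) * σs ^ 2 with hc_def
  set k : ℝ := (n : ℝ) / (N + n) with hk_def
  set m : ℝ := c + ((n : ℝ) - 1) / (N + n) * σt ^ 2 with hm_def
  set a : ℝ := c + q / (N + n) * σt ^ 2 with ha_def
  have hc0 : 0 ≤ c := mul_nonneg (div_nonneg hN hNn.le) (sq_nonneg _)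
  have hk0 : 0 < k := div_pos hn0 hNn
  have ha_pos : 0 < a := by
    rw [ha_def]
    have h1 : 0 < q / (N + (n:ℝ)) * σt ^ 2 := by positivity
    linarith
  -- q ≤ n - 1
  have hqn : q ≤ (n : ℝ) - 1 := by
    have hmono : ∫ ω, (q * σt ^ 2 / n : ℝ) ∂(ℙ : Measure Ω) ≤ ∫ ω, σt2hat ω :=
      integral_mono_ae (integrable_const _) hint hlb
    rw [integral_const, probReal_univ, one_smul, hmean] at hmono
    rw [div_le_iff₀ hn0] at hmono
    have h1 : q * σt ^ 2 ≤ ((n : ℝ) - 1) * σt ^ 2 := by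
      calc q * σt ^ 2 ≤ ((n:ℝ) - 1) / n * σt ^ 2 * n := hmono
        _ = ((n : ℝ) - 1) * σt ^ 2 := by field_simp
    exact le_of_mul_le_mul_right h1 (by positivity)
  have ham : a ≤ m := by
    rw [ha_def, hm_def]
    gcongr
  have hm_pos : 0 < m := lt_of_lt_of_le ha_pos ham
  set g : Ω → ℝ := fun ω => c + k * σt2hat ω with hg_def
  have hg_int : Integrable g ℙ := (integrable_const c).add (hint.const_mul k)
  have hkm : k * (((n : ℝ) - 1) / n * σt ^ 2) = ((n : ℝ) - 1) / (N + n) * σt ^ 2 := by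
    rw [hk_def]; field_simp
  have hEg : ∫ ω, g ω = m := by
    rw [hg_def]
    simp only []
    rw [integral_add (integrable_const c) (hint.const_mul k), integral_const,
      integral_const_mul, hmean, probReal_univ, one_smul, hkm, hm_def]
  have hga : ∀ᵐ ω ∂(ℙ : Measure Ω), a ≤ g ω := by
    filter_upwards [hlb] with ω h
    have hka : k * (q * σt ^ 2 / n) = q / (N + n) * σt ^ 2 := by
      rw [hk_def]; field_simp
    have h2 : k * (q * σt ^ 2 / n) ≤ k * σt2hat ω := mul_le_mul_of_nonneg_left h hk0.le
    rw [hka] at h2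
    rw [ha_def, hg_def]
    simp only []
    linarith
  -- integrability of sqrt ∘ g
  have hsqrt_meas : AEStronglyMeasurable (fun ω => Real.sqrt (g ω)) ℙ :=
    Real.continuous_sqrt.comp_aestronglyMeasurable hg_int.1
  have hsqrt_int : Integrable (fun ω => Real.sqrt (g ω)) ℙ := by
    have hbint : Integrable (fun ω => 1 + g ω) ℙ := (integrable_const (1:ℝ)).add hg_int
    refine Integrable.mono' hbint hsqrt_meas ?_
    filter_upwards [hga] with ω h
    have hg0 : 0 ≤ g ω := ha_pos.le.trans h
    show ‖Real.sqrt (g ω)‖ ≤ 1 + g ω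
    rw [Real.norm_eq_abs, abs_of_nonneg (Real.sqrt_nonneg _)]
    nlinarith [Real.sq_sqrt hg0, sq_nonneg (Real.sqrt (g ω) - 1), Real.sqrt_nonneg (g ω)]
  -- helper integrals
  have hsm : 0 < Real.sqrt m := Real.sqrt_pos.2 hm_pos
  have hint_sub : Integrable (fun ω => g ω - m) ℙ := hg_int.sub (integrable_const m)
  have hint_sub_div : Integrable (fun ω => (g ω - m) / (2 * Real.sqrt m)) ℙ :=
    hint_sub.div_const _
  have htang_int : Integrable (fun ω => Real.sqrt m + (g ω - m) / (2 * Real.sqrt m)) ℙ :=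
    (integrable_const _).add hint_sub_div
  have i1 : ∫ ω, (g ω - m) = 0 := by
    rw [integral_sub hg_int (integrable_const m), integral_const, probReal_univ,
      one_smul, hEg, sub_self]
  have i2 : ∫ ω, (g ω - m) / (2 * Real.sqrt m) = 0 := by
    rw [integral_div, i1, zero_div]
  have h2 : (∫ ω, (Real.sqrt m + (g ω - m) / (2 * Real.sqrt m))) = Real.sqrt m := by
    rw [integral_add (integrable_const _) hint_sub_div, integral_const, probReal_univ,
      one_smul, i2, add_zero]
  -- upper bound
  have hupper : (∫ ω, Real.sqrt (g ω)) ≤ Real.sqrt m := by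
    have h1 : (∫ ω, Real.sqrt (g ω)) ≤ ∫ ω, (Real.sqrt m + (g ω - m) / (2 * Real.sqrt m)) := by
      refine integral_mono_ae hsqrt_int htang_int ?_
      filter_upwards [hga] with ω h
      exact sqrt_le_tangent m (g ω) hm_pos (ha_pos.le.trans h)
    exact h2 ▸ h1
  -- second moment of g - m
  have hdev_eq : ∀ ω, (g ω - m) ^ 2 = k ^ 2 * (σt2hat ω - ∫ x, σt2hat x) ^ 2 := by
    intro ω
    rw [hmean, hg_def, hm_def]
    simp only []
    rw [← hkm]
    ring
  have hdev_int : Integrable (fun ω => (g ω - m) ^ 2) ℙ := by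
    have h2' : Integrable (fun ω => (σt2hat ω - ∫ x, σt2hat x) ^ 2) ℙ := by
      have := (hL2.sub (memLp_const (∫ x, σt2hat x))).integrable_sq
      simpa using this
    exact (h2'.const_mul (k ^ 2)).congr (ae_of_all _ fun ω => (hdev_eq ω).symm)
  have hdev_val : ∫ ω, (g ω - m) ^ 2 = k ^ 2 * ((2 * ((n : ℝ) - 1) / (n : ℝ) ^ 2) * σt ^ 4) := by
    calc ∫ ω, (g ω - m) ^ 2 = ∫ ω, k ^ 2 * (σt2hat ω - ∫ x, σt2hat x) ^ 2 := by
          congr 1; ext ω; exact hdev_eq ω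
      _ = k ^ 2 * ∫ ω, (σt2hat ω - ∫ x, σt2hat x) ^ 2 := integral_const_mul _ _
      _ = k ^ 2 * variance σt2hat ℙ := by
          congr 1
          rw [variance_eq_integral hL2.1.aemeasurable]
      _ = _ := by rw [hvar]
  -- lower bound
  have hdev_div_int : Integrable (fun ω => (g ω - m) ^ 2 / (8 * (a * Real.sqrt a))) ℙ :=
    hdev_int.div_const _
  have hlow_int : Integrable
      (fun ω => Real.sqrt m + (g ω - m) / (2 * Real.sqrt m)
        - (g ω - m) ^ 2 / (8 * (a * Real.sqrt a))) ℙ :=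
    htang_int.sub hdev_div_int
  have i3 : ∫ ω, (g ω - m) ^ 2 / (8 * (a * Real.sqrt a))
      = k ^ 2 * ((2 * ((n : ℝ) - 1) / (n : ℝ) ^ 2) * σt ^ 4) / (8 * (a * Real.sqrt a)) := by
    rw [integral_div, hdev_val]
  have hlower : Real.sqrt m - k ^ 2 * ((2 * ((n : ℝ) - 1) / (n : ℝ) ^ 2) * σt ^ 4)
      / (8 * (a * Real.sqrt a)) ≤ ∫ ω, Real.sqrt (g ω) := by
    have h1 : (∫ ω, (Real.sqrt m + (g ω - m) / (2 * Real.sqrt m)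
        - (g ω - m) ^ 2 / (8 * (a * Real.sqrt a)))) ≤ ∫ ω, Real.sqrt (g ω) := by
      refine integral_mono_ae hlow_int hsqrt_int ?_
      filter_upwards [hga] with ω h
      exact tangent_sub_le_sqrt a m (g ω) ha_pos ham h
    have h2' : ∫ ω, (Real.sqrt m + (g ω - m) / (2 * Real.sqrt m)
        - (g ω - m) ^ 2 / (8 * (a * Real.sqrt a)))
        = Real.sqrt m - k ^ 2 * ((2 * ((n : ℝ) - 1) / (n : ℝ) ^ 2) * σt ^ 4)
          / (8 * (a * Real.sqrt a)) := by
      rw [integral_sub htang_int hdev_div_int, h2, i3]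
    exact h2' ▸ h1
  -- convert rpow
  have hsa : 0 < Real.sqrt a := Real.sqrt_pos.2 ha_pos
  have hrpow : a ^ (-(3 : ℝ) / 2) = (a * Real.sqrt a)⁻¹ := by
    rw [show (-(3:ℝ) / 2) = -(3/2 : ℝ) by norm_num, Real.rpow_neg ha_pos.le]
    congr 1
    rw [show (3/2 : ℝ) = 1 + 1/2 by norm_num, Real.rpow_add ha_pos, Real.rpow_one,
      Real.sqrt_eq_rpow]
  have hcoef : ((n : ℝ) - 1) / (4 * (N + n) ^ 2) * σt ^ 4 * (a * Real.sqrt a)⁻¹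
      = k ^ 2 * ((2 * ((n : ℝ) - 1) / (n : ℝ) ^ 2) * σt ^ 4) / (8 * (a * Real.sqrt a)) := by
    rw [hk_def]
    have haw : a * Real.sqrt a ≠ 0 := by positivity
    field_simp
    ring
  constructor
  · rw [hrpow, hcoef]
    exact hlower
  · exact hupper
end

section
/- Assume μ̂_t is square-integrable with E[μ̂_t] = μ_t and Var[μ̂_t] = σ_t²/n, and assume σ̂_t² is integrable with E[σ̂_t²] = ((n−1)/n)·σ_t². Then the expected squared Wasserstein-2 distance is bounded from below by E[W₂²] ≥ L(N,n), where L(N,n) = (σ_t − √((N/(N+n))·σ_s² + ((n−1)/(N+n))·σ_t²))² + (N/(N+n))²·(μ_t − μ_s)² + (n/(N+n)²)·σ_t². -/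
open MeasureTheory ProbabilityTheory Real

lemma jensen_sqrt {Ω : Type*} [MeasureSpace Ω] [IsProbabilityMeasure (ℙ : Measure Ω)]
    {g : Ω → ℝ} (hg : Integrable g ℙ) (h0 : ∀ᵐ ω ∂(ℙ : Measure Ω), 0 ≤ g ω) :
    ∫ ω, Real.sqrt (g ω) ≤ Real.sqrt (∫ ω, g ω) := by
  have hmeas : AEStronglyMeasurable (fun ω => Real.sqrt (g ω)) ℙ :=
    continuous_sqrt.comp_aestronglyMeasurable hg.aestronglyMeasurable
  have hsq : (fun ω => Real.sqrt (g ω) ^ 2) =ᵐ[ℙ] g := by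
    filter_upwards [h0] with ω h using Real.sq_sqrt h
  have hL2 : MemLp (fun ω => Real.sqrt (g ω)) 2 ℙ := by
    rw [memLp_two_iff_integrable_sq hmeas]
    exact hg.congr hsq.symm
  have hvar := variance_nonneg (fun ω => Real.sqrt (g ω)) ℙ
  rw [variance_eq_sub hL2] at hvar
  have hint : (ℙ : Measure Ω)[(fun ω => Real.sqrt (g ω)) ^ 2] = ∫ ω, g ω :=
    integral_congr_ae hsq
  rw [hint] at hvar
  have hnn : 0 ≤ ∫ ω, Real.sqrt (g ω) :=
    integral_nonneg fun ω => Real.sqrt_nonneg _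
  have := Real.sqrt_le_sqrt (by linarith : (∫ ω, Real.sqrt (g ω)) ^ 2 ≤ ∫ ω, g ω)
  rwa [Real.sqrt_sq hnn] at this

set_option maxHeartbeats 1000000 in
/-- Lower bound of Proposition 1: the expected squared Wasserstein-2 distance
between the Gaussian with interpolated statistics `(μ̄, σ̄²)` and the Gaussian
with target statistics `(μ_t, σ_t²)` is bounded below by `L(N, n)`. -/
theorem wasserstein_expected_lower_bound
    {Ω : Type*} [MeasureSpace Ω] [IsProbabilityMeasure (ℙ : Measure Ω)]
    (μs μt σs σt N : ℝ) (n : ℕ)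
    (hσs : 0 < σs) (hσt : 0 < σt) (hn : 2 ≤ n) (hN : 0 ≤ N)
    (μthat σt2hat : Ω → ℝ)
    (hμL2 : MemLp μthat 2 ℙ)
    (hμmean : ∫ ω, μthat ω = μt)
    (hμvar : variance μthat ℙ = σt ^ 2 / n)
    (hσint : Integrable σt2hat ℙ)
    (hσnonneg : ∀ᵐ ω ∂(ℙ : Measure Ω), 0 ≤ σt2hat ω)
    (hσmean : ∫ ω, σt2hat ω = (((n : ℝ) - 1) / n) * σt ^ 2) :
    (σt - Real.sqrt (N / (N + n) * σs ^ 2 + ((n : ℝ) - 1) / (N + n) * σt ^ 2)) ^ 2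
        + (N / (N + n)) ^ 2 * (μt - μs) ^ 2 + (n : ℝ) / (N + n) ^ 2 * σt ^ 2
      ≤ ∫ ω,
          (σt ^ 2 + (N / (N + n) * σs ^ 2 + (n : ℝ) / (N + n) * σt2hat ω)
            - 2 * Real.sqrt (N / (N + n) * σs ^ 2 + (n : ℝ) / (N + n) * σt2hat ω) * σt
            + ((N / (N + n) * μs + (n : ℝ) / (N + n) * μthat ω) - μt) ^ 2) := by
  have hn0 : (0:ℝ) < n := by exact_mod_cast Nat.lt_of_lt_of_le Nat.zero_lt_two hn
  have hNn : (0:ℝ) < N + n := by linarith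
  set c : ℝ := N / (N + n) with hc_def
  set d : ℝ := (n : ℝ) / (N + n) with hd_def
  have hc0 : 0 ≤ c := by positivity
  have hd0 : 0 < d := by positivity
  have hcd : c + d = 1 := by
    rw [hc_def, hd_def, ← add_div, div_self hNn.ne']
  set g : Ω → ℝ := fun ω => c * σs ^ 2 + d * σt2hat ω with hg_def
  have hg : Integrable g ℙ := (integrable_const _).add (hσint.const_mul d)
  have hg0 : ∀ᵐ ω ∂(ℙ : Measure Ω), 0 ≤ g ω := by
    filter_upwards [hσnonneg] with ω h
    have : 0 ≤ d * σt2hat ω := mul_nonneg hd0.le h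
    have : 0 ≤ c * σs ^ 2 := by positivity
    simp only [hg_def]; nlinarith
  set A : ℝ := c * σs ^ 2 + ((n : ℝ) - 1) / (N + n) * σt ^ 2 with hA_def
  have hdd : d * (((n : ℝ) - 1) / n * σt ^ 2) = ((n : ℝ) - 1) / (N + n) * σt ^ 2 := by
    rw [hd_def]; field_simp
  have hIg : ∫ ω, g ω = A := by
    simp only [hg_def]
    rw [integral_add (integrable_const _) (hσint.const_mul d), integral_const,
      integral_const_mul, hσmean, hdd, hA_def]
    simp
  have hA0 : 0 ≤ A := by
    rw [hA_def]
    have h1 : (0:ℝ) ≤ ((n : ℝ) - 1) / (N + n) := by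
      apply div_nonneg _ hNn.le
      have : (2:ℝ) ≤ n := by exact_mod_cast hn
      linarith
    have : 0 ≤ c * σs ^ 2 := by positivity
    nlinarith [sq_nonneg σt]
  -- integrability of sqrt g
  have hsqrt_meas : AEStronglyMeasurable (fun ω => Real.sqrt (g ω)) ℙ :=
    continuous_sqrt.comp_aestronglyMeasurable hg.aestronglyMeasurable
  have hsqrt_int : Integrable (fun ω => Real.sqrt (g ω)) ℙ := by
    refine Integrable.mono' ((integrable_const 1).add hg) hsqrt_meas ?_
    filter_upwards [hg0] with ω h
    have hs := Real.sq_sqrt h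
    have hsn := Real.sqrt_nonneg (g ω)
    rw [Real.norm_eq_abs, abs_of_nonneg hsn]
    simp only [Pi.add_apply]
    nlinarith
  have hJ : ∫ ω, Real.sqrt (g ω) ≤ Real.sqrt A := by
    rw [← hIg]; exact jensen_sqrt hg hg0
  have hJ0 : 0 ≤ ∫ ω, Real.sqrt (g ω) := integral_nonneg fun ω => Real.sqrt_nonneg _
  -- the mean term
  have hYL2 : MemLp (fun ω => μthat ω - μt) 2 ℙ := hμL2.sub (memLp_const μt)
  have hYint : Integrable (fun ω => μthat ω - μt) ℙ := hYL2.integrable one_le_two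
  have hY2int : Integrable (fun ω => (μthat ω - μt) ^ 2) ℙ := by
    simpa using hYL2.integrable_sq
  have hIY : ∫ ω, (μthat ω - μt) = 0 := by
    rw [integral_sub (hμL2.integrable one_le_two) (integrable_const _), hμmean,
      integral_const]
    simp
  have hIY2 : ∫ ω, (μthat ω - μt) ^ 2 = σt ^ 2 / n := by
    have h := variance_eq_integral hμL2.aestronglyMeasurable.aemeasurable
    rw [hμmean] at h
    rw [← hμvar, h]
  have hq_eq : ∀ ω, ((c * μs + d * μthat ω) - μt) ^ 2
      = d ^ 2 * (μthat ω - μt) ^ 2 + (2 * c * d * (μs - μt)) * (μthat ω - μt)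
        + c ^ 2 * (μs - μt) ^ 2 := by
    intro ω
    have : c * μs + d * μthat ω - μt = d * (μthat ω - μt) + c * (μs - μt) := by
      linear_combination μt * hcd
    rw [this]; ring
  have hq_int : Integrable (fun ω => ((c * μs + d * μthat ω) - μt) ^ 2) ℙ := by
    have : Integrable (fun ω => d ^ 2 * (μthat ω - μt) ^ 2
        + (2 * c * d * (μs - μt)) * (μthat ω - μt) + c ^ 2 * (μs - μt) ^ 2) ℙ :=
      ((hY2int.const_mul _).add (hYint.const_mul _)).add (integrable_const _)
    exact this.congr (ae_of_all _ fun ω => (hq_eq ω).symm)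
  have hi1 : Integrable (fun ω => d ^ 2 * (μthat ω - μt) ^ 2) ℙ := hY2int.const_mul _
  have hi2 : Integrable (fun ω => (2 * c * d * (μs - μt)) * (μthat ω - μt)) ℙ :=
    hYint.const_mul _
  have hi12 : Integrable (fun ω => d ^ 2 * (μthat ω - μt) ^ 2
      + (2 * c * d * (μs - μt)) * (μthat ω - μt)) ℙ := hi1.add hi2
  have hIq : ∫ ω, ((c * μs + d * μthat ω) - μt) ^ 2
      = d ^ 2 * (σt ^ 2 / n) + c ^ 2 * (μs - μt) ^ 2 := by
    rw [integral_congr_ae (ae_of_all _ hq_eq)]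
    rw [integral_add hi12 (integrable_const _), integral_add hi1 hi2,
      integral_const_mul, integral_const_mul, hIY, hIY2, integral_const]
    simp
  -- split the main integral
  have h1 : Integrable (fun ω => σt ^ 2 + g ω) ℙ := (integrable_const _).add hg
  have h2 : Integrable (fun ω => 2 * Real.sqrt (g ω) * σt) ℙ := by
    simpa [mul_assoc, mul_comm, mul_left_comm] using (hsqrt_int.const_mul (2 * σt))
  have hsplit : ∫ ω, (σt ^ 2 + g ω - 2 * Real.sqrt (g ω) * σt
        + ((c * μs + d * μthat ω) - μt) ^ 2)
      = (σt ^ 2 + A) - 2 * σt * (∫ ω, Real.sqrt (g ω))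
        + (d ^ 2 * (σt ^ 2 / n) + c ^ 2 * (μs - μt) ^ 2) := by
    have h12 : Integrable (fun ω => σt ^ 2 + g ω - 2 * Real.sqrt (g ω) * σt) ℙ := h1.sub h2
    rw [integral_add h12 hq_int, integral_sub h1 h2,
      integral_add (integrable_const _) hg, integral_const, hIg, hIq]
    have : ∫ ω, 2 * Real.sqrt (g ω) * σt = 2 * σt * ∫ ω, Real.sqrt (g ω) := by
      rw [← integral_const_mul]
      congr 1; ext ω; ring
    rw [this]
    simp
  rw [hsplit]
  -- final arithmetic
  have hd2 : d ^ 2 * (σt ^ 2 / n) = (n : ℝ) / (N + n) ^ 2 * σt ^ 2 := by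
    rw [hd_def]; field_simp
  have hsA : Real.sqrt A ^ 2 = A := Real.sq_sqrt hA0
  have hmul : 2 * σt * (∫ ω, Real.sqrt (g ω)) ≤ 2 * σt * Real.sqrt A := by
    apply mul_le_mul_of_nonneg_left hJ (by positivity)
  have hsq : (σt - Real.sqrt A) ^ 2 = σt ^ 2 - 2 * σt * Real.sqrt A + A := by
    rw [sub_sq, hsA]
  have hms : (μt - μs) ^ 2 = (μs - μt) ^ 2 := by ring
  rw [hsq, hd2, hms]
  linarith [hmul]
end

section
/- Assume μ̂_t is square-integrable with E[μ̂_t] = μ_t and Var[μ̂_t] = σ_t²/n; assume σ̂_t² is square-integrable with E[σ̂_t²] = ((n−1)/n)·σ_t² and Var[σ̂_t²] = (2(n−1)/n²)·σ_t⁴; and assume σ̂_t² ≥ q·σ_t²/n almost surely for some real q > 0. Then the expected squared Wasserstein-2 distance is bounded from above by E[W₂²] ≤ U(N,n,q), where U(N,n,q) = L(N,n) + σ_t⁵·((n−1)/(2·(N+n)²))·((N/(N+n))·σ_s² + (q/(N+n))·σ_t²)^(−3/2) and L(N,n) = (σ_t − √((N/(N+n))·σ_s² + ((n−1)/(N+n))·σ_t²))²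 + (N/(N+n))²·(μ_t − μ_s)² + (n/(N+n)²)·σ_t². -/
open MeasureTheory ProbabilityTheory Real

lemma aux_stu (u s t : ℝ) (hu : 0 < u) (hs : u ≤ s) (ht : u ≤ t) :
    t + (s^2 - t^2)/(2*t) - (s^2 - t^2)^2/(8*u^3) ≤ s := by
  have ht0 : 0 < t := lt_of_lt_of_le hu ht
  have key : (s^2 - t^2)/(2*t) - (s - t) ≤ (s^2 - t^2)^2/(8*u^3) := by
    rw [div_sub' (by positivity : (2*t) ≠ 0), div_le_div_iff₀ (by positivity) (by positivity)]
    have h4 : 4*u^2 ≤ (s+t)^2 := by nlinarith [sq_nonneg (s + t - 2*u)]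
    have h3 : 8*u^3 ≤ 2*t*(s+t)^2 := by
      have := mul_le_mul_of_nonneg_right ht (sq_nonneg (s+t))
      have := mul_le_mul_of_nonneg_left h4 hu.le
      nlinarith
    nlinarith [mul_le_mul_of_nonneg_left h3 (sq_nonneg (s - t)), sq_nonneg (s-t), hu.le]
  linarith

lemma sqrt_defect (c m x : ℝ) (hc : 0 < c) (hm : c ≤ m) (hx : c ≤ x) :
    Real.sqrt m + (x - m)/(2*Real.sqrt m) - (x - m)^2/(8*(Real.sqrt c)^3) ≤ Real.sqrt x := by
  have h1 := aux_stu (Real.sqrt c) (Real.sqrt x) (Real.sqrt m)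
    (Real.sqrt_pos.2 hc) (Real.sqrt_le_sqrt hx) (Real.sqrt_le_sqrt hm)
  rw [Real.sq_sqrt (hc.le.trans hx), Real.sq_sqrt (hc.le.trans hm)] at h1
  exact h1

set_option maxHeartbeats 2000000 in
/-- Upper bound of Proposition 1: the expected squared Wasserstein-2 distance
between the Gaussian with interpolated statistics `(μ̄, σ̄²)` and the Gaussian
with target statistics `(μ_t, σ_t²)` is bounded above by `U(N, n, q)`, where
`q` plays the role of the left-tail chi-square quantile. -/
theorem wasserstein_expected_upper_bound
    {Ω : Type*} [MeasureSpace Ω] [IsProbabilityMeasure (ℙ : Measure Ω)]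
    (μs μt σs σt N q : ℝ) (n : ℕ)
    (hσs : 0 < σs) (hσt : 0 < σt) (hn : 2 ≤ n) (hN : 0 ≤ N) (hq : 0 < q)
    (μthat σt2hat : Ω → ℝ)
    (hμL2 : MemLp μthat 2 ℙ)
    (hμmean : ∫ ω, μthat ω = μt)
    (hμvar : variance μthat ℙ = σt ^ 2 / n)
    (hσL2 : MemLp σt2hat 2 ℙ)
    (hσmean : ∫ ω, σt2hat ω = (((n : ℝ) - 1) / n) * σt ^ 2)
    (hσvar : variance σt2hat ℙ = (2 * ((n : ℝ) - 1) / (n : ℝ) ^ 2) * σt ^ 4)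
    (hσlb : ∀ᵐ ω ∂(ℙ : Measure Ω), q * σt ^ 2 / n ≤ σt2hat ω) :
    ∫ ω,
        (σt ^ 2 + (N / (N + n) * σs ^ 2 + (n : ℝ) / (N + n) * σt2hat ω)
          - 2 * Real.sqrt (N / (N + n) * σs ^ 2 + (n : ℝ) / (N + n) * σt2hat ω) * σt
          + ((N / (N + n) * μs + (n : ℝ) / (N + n) * μthat ω) - μt) ^ 2)
      ≤ (σt - Real.sqrt (N / (N + n) * σs ^ 2 + ((n : ℝ) - 1) / (N + n) * σt ^ 2)) ^ 2
          + (N / (N + n)) ^ 2 * (μt - μs) ^ 2 + (n : ℝ) / (N + n) ^ 2 * σt ^ 2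
        + σt ^ 5 * (((n : ℝ) - 1) / (2 * (N + n) ^ 2))
          * (N / (N + n) * σs ^ 2 + q / (N + n) * σt ^ 2) ^ (-(3 : ℝ) / 2) := by
  have hn2 : (2:ℝ) ≤ (n:ℝ) := by exact_mod_cast hn
  have hn0 : (0:ℝ) < (n:ℝ) := by linarith
  have hD : (0:ℝ) < N + (n:ℝ) := by linarith
  set D : ℝ := N + (n:ℝ) with hDdef
  set a : ℝ := N / D * σs ^ 2 with hadef
  set b : ℝ := (n:ℝ) / D with hbdef
  have ha : 0 ≤ a := by rw [hadef]; positivity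
  have hb : 0 < b := by rw [hbdef]; positivity
  set c : ℝ := a + q / D * σt ^ 2 with hcdef
  set m : ℝ := a + ((n:ℝ) - 1) / D * σt ^ 2 with hmdef
  set k : ℝ := N / D * (μs - μt) with hkdef
  clear_value D a b c m k
  have hc : 0 < c := by
    have : 0 < q / D * σt ^ 2 := by positivity
    rw [hcdef]; linarith
  have hm0 : 0 < m := by
    have : 0 < ((n:ℝ) - 1) / D * σt ^ 2 := by
      have : (0:ℝ) < (n:ℝ) - 1 := by linarith
      positivity
    rw [hmdef]; linarith
  -- basic integrability
  have hμ1 : Integrable μthat ℙ := hμL2.integrable one_le_two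
  have hσ1 : Integrable σt2hat ℙ := hσL2.integrable one_le_two
  have hXL2 : MemLp (fun ω => a + b * σt2hat ω) 2 ℙ :=
    (memLp_const a).add (hσL2.const_mul b)
  have hX1 : Integrable (fun ω => a + b * σt2hat ω) ℙ := hXL2.integrable one_le_two
  have hXc : ∀ᵐ ω ∂(ℙ : Measure Ω), c ≤ a + b * σt2hat ω := by
    filter_upwards [hσlb] with ω h
    have h1 : b * (q * σt ^ 2 / n) ≤ b * σt2hat ω := mul_le_mul_of_nonneg_left h hb.le
    have hbq : q / D * σt ^ 2 = b * (q * σt ^ 2 / n) := by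
      rw [hbdef]; field_simp
    rw [hcdef, hbq]; linarith
  have hEX : ∫ ω, (a + b * σt2hat ω) = m := by
    rw [integral_add (integrable_const a) (hσ1.const_mul b), integral_const_mul b σt2hat, hσmean,
      integral_const, probReal_univ]
    rw [hmdef, hbdef]
    field_simp
    ring
  have hmc : c ≤ m := by
    have h := integral_mono_ae (integrable_const c) hX1 hXc
    rw [hEX, integral_const, probReal_univ] at h
    simpa using h
  -- centered integrals
  have hXd1 : Integrable (fun ω => (a + b * σt2hat ω) - m) ℙ := hX1.sub (integrable_const m)
  have hXm2 : Integrable (fun ω => ((a + b * σt2hat ω) - m)^2) ℙ :=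
    (hXL2.sub (memLp_const m)).integrable_sq
  have hμd1 : Integrable (fun ω => μthat ω - μt) ℙ := hμ1.sub (integrable_const μt)
  have hμd2 : Integrable (fun ω => (μthat ω - μt)^2) ℙ :=
    (hμL2.sub (memLp_const μt)).integrable_sq
  have hEXc : ∫ ω, ((a + b * σt2hat ω) - m) = 0 := by
    rw [integral_sub hX1 (integrable_const m), hEX, integral_const, probReal_univ]
    simp
  have hEμc : ∫ ω, (μthat ω - μt) = 0 := by
    rw [integral_sub hμ1 (integrable_const μt), hμmean, integral_const, probReal_univ]
    simp
  have hVμ : ∫ ω, (μthat ω - μt)^2 = σt ^ 2 / n := by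
    have hv := variance_eq_integral hμL2.aestronglyMeasurable.aemeasurable
    rw [hμvar] at hv
    simp only [Pi.pow_apply, Pi.sub_apply, hμmean] at hv
    exact hv.symm
  have hVX : ∫ ω, ((a + b * σt2hat ω) - m)^2 = b^2 * (2 * ((n:ℝ) - 1) / (n:ℝ)^2 * σt ^ 4) := by
    have hv := variance_eq_integral hσL2.aestronglyMeasurable.aemeasurable
    rw [hσvar] at hv
    simp only [Pi.pow_apply, Pi.sub_apply, hσmean] at hv
    have h1 : ∀ ω, (a + b * σt2hat ω) - m = b * (σt2hat ω - ((n:ℝ) - 1) / n * σt ^ 2) := by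
      intro ω; rw [hmdef, hbdef]; field_simp; ring
    simp only [h1, mul_pow]
    rw [integral_const_mul (b^2), ← hv]
  -- integrability of f
  have hsqrt : Integrable (fun ω => Real.sqrt (a + b * σt2hat ω)) ℙ := by
    refine Integrable.mono' ((integrable_const (1:ℝ)).add hX1.abs)
      (Real.continuous_sqrt.comp_aestronglyMeasurable hX1.aestronglyMeasurable) ?_
    refine ae_of_all _ fun ω => ?_
    rw [Real.norm_eq_abs, abs_of_nonneg (Real.sqrt_nonneg _)]
    have hx1 := abs_nonneg (a + b * σt2hat ω)
    have hx2 := le_abs_self (a + b * σt2hat ω)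
    have h1 : Real.sqrt (a + b * σt2hat ω) ≤ Real.sqrt ((1 + |a + b * σt2hat ω|)^2) :=
      Real.sqrt_le_sqrt (by nlinarith)
    rwa [Real.sqrt_sq (by positivity)] at h1
  have hμb2 : Integrable (fun ω => ((N / D * μs + b * μthat ω) - μt)^2) ℙ :=
    (((memLp_const (N / D * μs)).add (hμL2.const_mul b)).sub (memLp_const μt)).integrable_sq
  have hf : Integrable (fun ω => σt ^ 2 + (a + b * σt2hat ω)
      - 2 * Real.sqrt (a + b * σt2hat ω) * σt
      + ((N / D * μs + b * μthat ω) - μt) ^ 2) ℙ :=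
    (((integrable_const (σt^2)).add hX1).sub ((hsqrt.const_mul 2).mul_const σt)).add hμb2
  -- pieces of the majorant g
  have hI1 : Integrable (fun _ : Ω => σt^2 - 2*σt*Real.sqrt m + k^2) ℙ := integrable_const _
  have hI12 : Integrable (fun ω => (σt^2 - 2*σt*Real.sqrt m + k^2) + (a + b * σt2hat ω)) ℙ :=
    hI1.add hX1
  have hI3 : Integrable (fun ω => (-(σt / Real.sqrt m)) * ((a + b * σt2hat ω) - m)) ℙ :=
    hXd1.const_mul _
  have hI123 : Integrable (fun ω => (σt^2 - 2*σt*Real.sqrt m + k^2) + (a + b * σt2hat ω)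
      + (-(σt / Real.sqrt m)) * ((a + b * σt2hat ω) - m)) ℙ := hI12.add hI3
  have hI4 : Integrable (fun ω => (σt / (4*(Real.sqrt c)^3)) * ((a + b * σt2hat ω) - m)^2) ℙ :=
    hXm2.const_mul _
  have hI1234 : Integrable (fun ω => (σt^2 - 2*σt*Real.sqrt m + k^2) + (a + b * σt2hat ω)
      + (-(σt / Real.sqrt m)) * ((a + b * σt2hat ω) - m)
      + (σt / (4*(Real.sqrt c)^3)) * ((a + b * σt2hat ω) - m)^2) ℙ := hI123.add hI4
  have hI5 : Integrable (fun ω => (2*k*b) * (μthat ω - μt)) ℙ := hμd1.const_mul _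
  have hI12345 : Integrable (fun ω => (σt^2 - 2*σt*Real.sqrt m + k^2) + (a + b * σt2hat ω)
      + (-(σt / Real.sqrt m)) * ((a + b * σt2hat ω) - m)
      + (σt / (4*(Real.sqrt c)^3)) * ((a + b * σt2hat ω) - m)^2
      + (2*k*b) * (μthat ω - μt)) ℙ := hI1234.add hI5
  have hI6 : Integrable (fun ω => b^2 * (μthat ω - μt)^2) ℙ := hμd2.const_mul _
  have hg : Integrable (fun ω => (σt^2 - 2*σt*Real.sqrt m + k^2) + (a + b * σt2hat ω)
      + (-(σt / Real.sqrt m)) * ((a + b * σt2hat ω) - m)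
      + (σt / (4*(Real.sqrt c)^3)) * ((a + b * σt2hat ω) - m)^2
      + (2*k*b) * (μthat ω - μt) + b^2 * (μthat ω - μt)^2) ℙ := hI12345.add hI6
  -- pointwise bound
  have hfg : ∀ᵐ ω ∂(ℙ : Measure Ω),
      σt ^ 2 + (a + b * σt2hat ω) - 2 * Real.sqrt (a + b * σt2hat ω) * σt
        + ((N / D * μs + b * μthat ω) - μt) ^ 2
      ≤ (σt^2 - 2*σt*Real.sqrt m + k^2) + (a + b * σt2hat ω)
        + (-(σt / Real.sqrt m)) * ((a + b * σt2hat ω) - m)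
        + (σt / (4*(Real.sqrt c)^3)) * ((a + b * σt2hat ω) - m)^2
        + (2*k*b) * (μthat ω - μt) + b^2 * (μthat ω - μt)^2 := by
    filter_upwards [hXc] with ω hω
    have hdef := sqrt_defect c m (a + b * σt2hat ω) hc hmc hω
    have hprod := mul_le_mul_of_nonneg_left hdef (by positivity : (0:ℝ) ≤ 2*σt)
    have hid : (N / D * μs + b * μthat ω) - μt = k + b * (μthat ω - μt) := by
      rw [hkdef, hbdef, hDdef]; field_simp; ring
    rw [hid]
    have hsm0 : (0:ℝ) < Real.sqrt m := Real.sqrt_pos.2 hm0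
    have hsc0 : (0:ℝ) < Real.sqrt c := Real.sqrt_pos.2 hc
    have hexp : 2*σt*(Real.sqrt m + ((a + b * σt2hat ω) - m)/(2*Real.sqrt m)
          - ((a + b * σt2hat ω) - m)^2/(8*(Real.sqrt c)^3))
        = 2*σt*Real.sqrt m + (σt/Real.sqrt m)*((a + b * σt2hat ω) - m)
          - (σt/(4*(Real.sqrt c)^3))*((a + b * σt2hat ω) - m)^2 := by
      ring
    rw [hexp] at hprod
    linarith [hprod]
  have step : (∫ ω, (σt ^ 2 + (a + b * σt2hat ω)
      - 2 * Real.sqrt (a + b * σt2hat ω) * σt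
      + ((N / D * μs + b * μthat ω) - μt) ^ 2)) ≤ ∫ ω, ((σt^2 - 2*σt*Real.sqrt m + k^2) + (a + b * σt2hat ω)
      + (-(σt / Real.sqrt m)) * ((a + b * σt2hat ω) - m)
      + (σt / (4*(Real.sqrt c)^3)) * ((a + b * σt2hat ω) - m)^2
      + (2*k*b) * (μthat ω - μt) + b^2 * (μthat ω - μt)^2) := integral_mono_ae hf hg hfg
  refine le_trans step (le_of_eq ?_)
  rw [integral_add hI12345 hI6, integral_add hI1234 hI5, integral_add hI123 hI4,
    integral_add hI12 hI3, integral_add hI1 hX1,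
    integral_const_mul (-(σt / Real.sqrt m)) (fun ω => (a + b * σt2hat ω) - m),
    integral_const_mul (σt / (4*(Real.sqrt c)^3)) (fun ω => ((a + b * σt2hat ω) - m)^2),
    integral_const_mul (2*k*b) (fun ω => μthat ω - μt),
    integral_const_mul (b^2) (fun ω => (μthat ω - μt)^2),
    hEX, hEXc, hVX, hEμc, hVμ, integral_const, probReal_univ, one_smul]
  have hsm2 : Real.sqrt m ^ 2 = m := Real.sq_sqrt hm0.le
  have h32 : c ^ ((3:ℝ)/2) = Real.sqrt c ^ 3 := by
    rw [Real.sqrt_eq_rpow, ← Real.rpow_natCast (c ^ ((1:ℝ)/2)) 3, ← Real.rpow_mul hc.le]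
    norm_num
  have hrpow : c ^ (-(3:ℝ)/2) = (Real.sqrt c ^ 3)⁻¹ := by
    rw [show (-(3:ℝ)/2) = -((3:ℝ)/2) by norm_num, Real.rpow_neg hc.le, h32]
  rw [hrpow, show ((σt - Real.sqrt m)^2 : ℝ) = σt^2 - 2*σt*Real.sqrt m + m by
      rw [sub_sq, hsm2], hkdef, hbdef]
  have hsc0 : (0:ℝ) < Real.sqrt c := Real.sqrt_pos.2 hc
  field_simp
  ring
end

section
/- Fix real numbers μ_s, μ_t, reals σ_s > 0, σ_t > 0, and a real N ≥ 0, and let (q_n)_{n≥2} be a sequence of positive reals with q_n/n → 1 as n → ∞ (as holds for the chi-square quantiles q_n = χ²_{1−α/2, n−1}). Then the upper bound of Proposition 1 vanishes in the large-sample limit: U(N,n,q_n) = L(N,n) + σ_t⁵·((n−1)/(2·(N+n)²))·((N/(N+n))·σ_s² + (q_n/(N+n))·σ_t²)^(−3/2) tends to 0 as n tends to infinity, where L(N,n) = (σ_t − √((N/(N+n))·σ_s² + ((n−1)/(N+n))·σ_t²))² + (N/(N+n))²·(μ_t − μ_s)² + (n/(N+n)²)·σ_t². -/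
open Real Filter Topology

/-- The upper bound `U(N, n, q_n)` of Proposition 1 vanishes in the
large-sample limit `n → ∞`, for any sequence of positive reals `q_n`
with `q_n / n → 1` (as holds for the chi-square quantiles). -/
theorem upper_bound_tendsto_zero
    (μs μt σs σt N : ℝ) (hσs : 0 < σs) (hσt : 0 < σt) (hN : 0 ≤ N)
    (q : ℕ → ℝ) (hq : ∀ n, 2 ≤ n → 0 < q n)
    (hqlim : Tendsto (fun n : ℕ => q n / n) atTop (𝓝 1)) :
    Tendsto
      (fun n : ℕ =>
        ((σt - Real.sqrt (N / (N + n) * σs ^ 2 + ((n : ℝ) - 1) / (N + n) * σt ^ 2)) ^ 2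
            + (N / (N + n)) ^ 2 * (μt - μs) ^ 2 + (n : ℝ) / (N + n) ^ 2 * σt ^ 2)
          + σt ^ 5 * (((n : ℝ) - 1) / (2 * (N + n) ^ 2))
            * (N / (N + n) * σs ^ 2 + q n / (N + n) * σt ^ 2) ^ (-(3 : ℝ) / 2))
      atTop (𝓝 0) := by
  have hNn : Tendsto (fun n : ℕ => (N + n : ℝ)) atTop atTop :=
    tendsto_atTop_add_const_left _ N tendsto_natCast_atTop_atTop
  have hinv : Tendsto (fun n : ℕ => ((N + n : ℝ))⁻¹) atTop (𝓝 0) :=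
    hNn.inv_tendsto_atTop
  have hpos : ∀ᶠ n : ℕ in atTop, (0 : ℝ) < N + n := by
    filter_upwards [eventually_ge_atTop 1] with n hn
    have : (1 : ℝ) ≤ n := by exact_mod_cast hn
    linarith
  have h1 : Tendsto (fun n : ℕ => N / (N + n)) atTop (𝓝 0) := by
    simpa [div_eq_mul_inv] using hinv.const_mul N
  have h2 : Tendsto (fun n : ℕ => (n : ℝ) / (N + n)) atTop (𝓝 1) := by
    have h : Tendsto (fun n : ℕ => 1 - N / (N + n)) atTop (𝓝 1) := by
      simpa using tendsto_const_nhds.sub h1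
    refine h.congr' ?_
    filter_upwards [hpos] with n hn
    field_simp
    ring
  have h3 : Tendsto (fun n : ℕ => ((n : ℝ) - 1) / (N + n)) atTop (𝓝 1) := by
    have hc : Tendsto (fun n : ℕ => (N + 1) / (N + n)) atTop (𝓝 0) := by
      simpa [div_eq_mul_inv] using hinv.const_mul (N + 1)
    have h : Tendsto (fun n : ℕ => 1 - (N + 1) / (N + n)) atTop (𝓝 1) := by
      simpa using tendsto_const_nhds.sub hc
    refine h.congr' ?_
    filter_upwards [hpos] with n hn
    field_simp
    ring
  have h4 : Tendsto (fun n : ℕ => q n / (N + n)) atTop (𝓝 1) := by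
    have h : Tendsto (fun n : ℕ => (q n / n) * ((n : ℝ) / (N + n))) atTop (𝓝 1) := by
      simpa using hqlim.mul h2
    refine h.congr' ?_
    filter_upwards [hpos, eventually_ge_atTop 1] with n hn hn1
    have hn0 : (n : ℝ) ≠ 0 := by
      exact_mod_cast Nat.one_le_iff_ne_zero.mp hn1
    field_simp
  -- first summand
  have hbase1 :
      Tendsto (fun n : ℕ => N / (N + n) * σs ^ 2 + ((n : ℝ) - 1) / (N + n) * σt ^ 2)
        atTop (𝓝 (σt ^ 2)) := by
    simpa using (h1.mul_const (σs ^ 2)).add (h3.mul_const (σt ^ 2))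
  have hsqrt :
      Tendsto (fun n : ℕ =>
        Real.sqrt (N / (N + n) * σs ^ 2 + ((n : ℝ) - 1) / (N + n) * σt ^ 2))
        atTop (𝓝 σt) := by
    have := hbase1.sqrt
    rwa [Real.sqrt_sq hσt.le] at this
  have hA :
      Tendsto (fun n : ℕ =>
        (σt - Real.sqrt (N / (N + n) * σs ^ 2 + ((n : ℝ) - 1) / (N + n) * σt ^ 2)) ^ 2)
        atTop (𝓝 0) := by
    simpa using ((tendsto_const_nhds : Tendsto (fun _ : ℕ => σt) atTop (𝓝 σt)).sub hsqrt).pow 2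
  have hB :
      Tendsto (fun n : ℕ => (N / (N + n)) ^ 2 * (μt - μs) ^ 2) atTop (𝓝 0) := by
    simpa using (h1.pow 2).mul_const ((μt - μs) ^ 2)
  have hC :
      Tendsto (fun n : ℕ => (n : ℝ) / (N + n) ^ 2 * σt ^ 2) atTop (𝓝 0) := by
    have h : Tendsto (fun n : ℕ => ((n : ℝ) / (N + n)) * (N + n)⁻¹ * σt ^ 2)
        atTop (𝓝 0) := by
      simpa using (h2.mul hinv).mul_const (σt ^ 2)
    refine h.congr fun n => ?_
    simp only [div_eq_mul_inv, pow_two, mul_inv]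
    ring
  have hcoef :
      Tendsto (fun n : ℕ => ((n : ℝ) - 1) / (2 * (N + n) ^ 2)) atTop (𝓝 0) := by
    have h : Tendsto (fun n : ℕ => (((n : ℝ) - 1) / (N + n)) * (N + n)⁻¹ * 2⁻¹)
        atTop (𝓝 0) := by
      simpa using (h3.mul hinv).mul_const (2 : ℝ)⁻¹
    refine h.congr fun n => ?_
    simp only [div_eq_mul_inv, pow_two, mul_inv]
    ring
  have hbase2 :
      Tendsto (fun n : ℕ => N / (N + n) * σs ^ 2 + q n / (N + n) * σt ^ 2)
        atTop (𝓝 (σt ^ 2)) := by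
    simpa using (h1.mul_const (σs ^ 2)).add (h4.mul_const (σt ^ 2))
  have hrpow :
      Tendsto (fun n : ℕ =>
        (N / (N + n) * σs ^ 2 + q n / (N + n) * σt ^ 2) ^ (-(3 : ℝ) / 2))
        atTop (𝓝 ((σt ^ 2) ^ (-(3 : ℝ) / 2))) :=
    hbase2.rpow_const (Or.inl (by positivity))
  have hD :
      Tendsto (fun n : ℕ =>
        σt ^ 5 * (((n : ℝ) - 1) / (2 * (N + n) ^ 2))
          * (N / (N + n) * σs ^ 2 + q n / (N + n) * σt ^ 2) ^ (-(3 : ℝ) / 2))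
        atTop (𝓝 0) := by
    have := ((tendsto_const_nhds (x := σt ^ 5)).mul hcoef).mul hrpow
    simpa using this
  simpa using ((hA.add hB).add hC).add hD
end

section
/- Let D ≥ 1 be an integer and fix, for each coordinate i ∈ {1,…,D}, real numbers μ_{s,i}, μ_{t,i}, reals σ_{s,i} > 0, σ_{t,i} > 0, an integer n ≥ 2, a real N ≥ 0, and a real q > 0. On a probability space, let (μ̂_{t,i})_{i} and (σ̂²_{t,i})_{i} be real random variables such that for every i: μ̂_{t,i} is square-integrable with E[μ̂_{t,i}] = μ_{t,i} and Var[μ̂_{t,i}] = σ_{t,i}²/n; σ̂²_{t,i} is square-integrable with σ̂²_{t,i} ≥ q·σ_{t,i}²/n almost surely, E[σ̂²_{t,i}] = ((n−1)/n)·σ_{t,i}², and Var[σ̂²_{t,i}] = (2(n−1)/n²)·σ_{t,i}⁴. Define per coordinate μ̄_i = (N/(N+n))·μ_{s,i} + (n/(N+n))·μ̂_{t,i}, σ̄_i² = (N/(N+n))·σ_{s,i}² + (n/(N+n))·σ̂²_{t,i}, σ̄_i = √(σ̄_i²), and the multivariate squared Wasserstein-2 distance for diagonal covariances W₂² = Σ_{i=1}^{D}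 (σ_{t,i}² + σ̄_i² − 2·σ̄_i·σ_{t,i} + (μ̄_i − μ_{t,i})²). Then Σ_{i=1}^{D} L_i ≤ E[W₂²] ≤ Σ_{i=1}^{D} U_i, where for each i: L_i = (σ_{t,i} − √((N/(N+n))·σ_{s,i}² + ((n−1)/(N+n))·σ_{t,i}²))² + (N/(N+n))²·(μ_{t,i} − μ_{s,i})² + (n/(N+n)²)·σ_{t,i}², and U_i = L_i + σ_{t,i}⁵·((n−1)/(2·(N+n)²))·((N/(N+n))·σ_{s,i}² + (q/(N+n))·σ_{t,i}²)^(−3/2). -/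
open MeasureTheory ProbabilityTheory Real Finset

lemma sqrt_tangent_upper {z m : ℝ} (hm : 0 < m) (hz : 0 ≤ z) :
    Real.sqrt z ≤ Real.sqrt m + (z - m) / (2 * Real.sqrt m) := by
  have ht : 0 < Real.sqrt m := Real.sqrt_pos.2 hm
  have ht2 : Real.sqrt m ^ 2 = m := Real.sq_sqrt hm.le
  have hs2 : Real.sqrt z ^ 2 = z := Real.sq_sqrt hz
  have key : Real.sqrt m + (z - m) / (2 * Real.sqrt m) - Real.sqrt z
      = (Real.sqrt z - Real.sqrt m)^2 / (2 * Real.sqrt m) := by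
    field_simp
    nlinarith [hs2, ht2]
  nlinarith [div_nonneg (sq_nonneg (Real.sqrt z - Real.sqrt m))
    (by positivity : (0:ℝ) ≤ 2 * Real.sqrt m), key]

lemma sqrt_tangent_lower {z m z0 : ℝ} (h0 : 0 < z0) (hz : z0 ≤ z) (hm : z0 ≤ m) :
    Real.sqrt m + (z - m) / (2 * Real.sqrt m) - (z - m)^2 / (8 * (z0 * Real.sqrt z0))
      ≤ Real.sqrt z := by
  set s := Real.sqrt z with hsdef
  set t := Real.sqrt m with htdef
  set u := Real.sqrt z0 with hudef
  have hu : 0 < u := Real.sqrt_pos.2 h0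
  have hut : u ≤ t := Real.sqrt_le_sqrt hm
  have hus : u ≤ s := Real.sqrt_le_sqrt hz
  have ht : 0 < t := lt_of_lt_of_le hu hut
  have hspos : 0 < s := lt_of_lt_of_le hu hus
  have hs2 : s ^ 2 = z := Real.sq_sqrt (h0.le.trans hz)
  have ht2 : t ^ 2 = m := Real.sq_sqrt (h0.le.trans hm)
  have hu2 : u ^ 2 = z0 := Real.sq_sqrt h0.le
  have hid : t + (z - m) / (2 * t) - s = (s - t)^2 / (2 * t) := by
    field_simp
    nlinarith [hs2, ht2]
  have hq2 : (z - m)^2 = (s - t)^2 * (s + t)^2 := by nlinarith [hs2, ht2]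
  have h3 : (s - t)^2 / (2 * t) ≤ (z - m)^2 / (8 * (z0 * u)) := by
    rw [hq2, div_le_div_iff₀ (by positivity) (by positivity)]
    have hden : 8 * (z0 * u) ≤ 2 * t * (s + t)^2 := by nlinarith [hu2, hu, hut, hus]
    nlinarith [mul_le_mul_of_nonneg_left hden (sq_nonneg (s - t))]
  linarith

set_option maxHeartbeats 2000000 in
lemma uni_aux {Ω : Type*} [MeasureSpace Ω] [IsProbabilityMeasure (ℙ : Measure Ω)]
    (μs μt σs σt N q : ℝ) (n : ℕ)
    (hσs : 0 < σs) (hσt : 0 < σt) (hn : 2 ≤ n) (hN : 0 ≤ N) (hq : 0 < q)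
    (Y X : Ω → ℝ)
    (hY2 : MemLp Y 2 ℙ) (hYm : ∫ ω, Y ω = μt) (hYv : variance Y ℙ = σt ^ 2 / n)
    (hX2 : MemLp X 2 ℙ) (hXlb : ∀ᵐ ω ∂(ℙ : Measure Ω), q * σt ^ 2 / n ≤ X ω)
    (hXm : ∫ ω, X ω = (((n : ℝ) - 1) / n) * σt ^ 2)
    (hXv : variance X ℙ = (2 * ((n : ℝ) - 1) / (n : ℝ) ^ 2) * σt ^ 4) :
    Integrable (fun ω => σt ^ 2 + (N / (N + n) * σs ^ 2 + (n : ℝ) / (N + n) * X ω)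
        - 2 * Real.sqrt (N / (N + n) * σs ^ 2 + (n : ℝ) / (N + n) * X ω) * σt
        + ((N / (N + n) * μs + (n : ℝ) / (N + n) * Y ω) - μt) ^ 2) ℙ
    ∧ ((σt - Real.sqrt (N / (N + n) * σs ^ 2 + ((n : ℝ) - 1) / (N + n) * σt ^ 2)) ^ 2
          + (N / (N + n)) ^ 2 * (μt - μs) ^ 2 + (n : ℝ) / (N + n) ^ 2 * σt ^ 2)
      ≤ ∫ ω, (σt ^ 2 + (N / (N + n) * σs ^ 2 + (n : ℝ) / (N + n) * X ω)
        - 2 * Real.sqrt (N / (N + n) * σs ^ 2 + (n : ℝ) / (N + n) * X ω) * σt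
        + ((N / (N + n) * μs + (n : ℝ) / (N + n) * Y ω) - μt) ^ 2)
    ∧ (∫ ω, (σt ^ 2 + (N / (N + n) * σs ^ 2 + (n : ℝ) / (N + n) * X ω)
        - 2 * Real.sqrt (N / (N + n) * σs ^ 2 + (n : ℝ) / (N + n) * X ω) * σt
        + ((N / (N + n) * μs + (n : ℝ) / (N + n) * Y ω) - μt) ^ 2))
      ≤ (((σt - Real.sqrt (N / (N + n) * σs ^ 2 + ((n : ℝ) - 1) / (N + n) * σt ^ 2)) ^ 2
            + (N / (N + n)) ^ 2 * (μt - μs) ^ 2 + (n : ℝ) / (N + n) ^ 2 * σt ^ 2)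
            + σt ^ 5 * (((n : ℝ) - 1) / (2 * (N + n) ^ 2))
              * (N / (N + n) * σs ^ 2 + q / (N + n) * σt ^ 2) ^ (-(3 : ℝ) / 2)) := by
  have hn2 : (2:ℝ) ≤ (n:ℝ) := by exact_mod_cast hn
  have hnpos : (0:ℝ) < n := by linarith
  have hnne : (n:ℝ) ≠ 0 := ne_of_gt hnpos
  have hk : (0:ℝ) < N + n := by linarith
  have hkne : (N + (n:ℝ)) ≠ 0 := ne_of_gt hk
  set a : ℝ := N / (N + n) * σs ^ 2 with ha
  set b : ℝ := (n : ℝ) / (N + n) with hb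
  set c : ℝ := N / (N + n) * μs with hc
  have ha0 : 0 ≤ a := by positivity
  have hb0 : 0 < b := by positivity
  set z0 : ℝ := a + q / (N + n) * σt ^ 2 with hz0def
  have hz0 : 0 < z0 := by
    have h : 0 < q / (N + n) * σt ^ 2 := by positivity
    positivity
  have hXint : Integrable X ℙ := hX2.integrable one_le_two
  have hqn : q ≤ (n:ℝ) - 1 := by
    have h1 : ∫ ω, (q * σt ^ 2 / n : ℝ) ∂(ℙ : Measure Ω) ≤ ∫ ω, X ω :=
      integral_mono_ae (integrable_const _) hXint hXlb
    rw [integral_const] at h1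
    simp only [measure_univ, ENNReal.toReal_one, probReal_univ, smul_eq_mul, one_mul] at h1
    rw [hXm, div_le_iff₀ hnpos] at h1
    have h2 : ((n:ℝ) - 1) / n * σt ^ 2 * n = ((n:ℝ) - 1) * σt ^ 2 := by field_simp
    rw [h2] at h1
    have hσt2 : 0 < σt ^ 2 := by positivity
    nlinarith only [h1, hσt2]
  set m : ℝ := a + ((n:ℝ) - 1) / (N + n) * σt ^ 2 with hmdef
  have hm0 : 0 < m := by
    have h1 : 0 < ((n:ℝ) - 1) / (N + n) * σt ^ 2 := by
      have h2 : (0:ℝ) < (n:ℝ) - 1 := by linarith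
      positivity
    positivity
  have hz0m : z0 ≤ m := by
    rw [hz0def, hmdef]
    gcongr
  have hbq : b * (q * σt ^ 2 / n) = q / (N + n) * σt ^ 2 := by
    rw [hb]; field_simp
  have hZlb : ∀ᵐ ω ∂(ℙ : Measure Ω), z0 ≤ a + b * X ω := by
    filter_upwards [hXlb] with ω h
    rw [hz0def, ← hbq]
    exact (add_le_add_iff_left a).2 (mul_le_mul_of_nonneg_left h hb0.le)
  have hZint : Integrable (fun ω => a + b * X ω) ℙ :=
    (integrable_const a).add (hXint.const_mul b)
  have hZ2 : MemLp (fun ω => a + b * X ω) 2 ℙ := (memLp_const a).add (hX2.const_mul b)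
  have hbXint : Integrable (fun ω => b * X ω) ℙ := hXint.const_mul b
  have hZmean : ∫ ω, (a + b * X ω) = m := by
    rw [integral_add (integrable_const a) hbXint, integral_const, integral_const_mul, hXm]
    simp only [measure_univ, ENNReal.toReal_one, probReal_univ, smul_eq_mul, one_mul]
    rw [hmdef, hb]
    field_simp
  have hsqrtm : AEStronglyMeasurable (fun ω => Real.sqrt (a + b * X ω)) ℙ :=
    Real.continuous_sqrt.comp_aestronglyMeasurable hZint.1
  have habs1 : Integrable (fun ω => |a + b * X ω| + 1) ℙ := hZint.abs.add (integrable_const 1)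
  have hsqrt_int : Integrable (fun ω => Real.sqrt (a + b * X ω)) ℙ := by
    refine habs1.mono hsqrtm ?_
    filter_upwards with ω
    have h1 : Real.sqrt (a + b * X ω) ≤ |a + b * X ω| + 1 := by
      nlinarith [Real.sq_sqrt (abs_nonneg (a + b * X ω)), Real.sqrt_nonneg (|a + b * X ω|),
        Real.sqrt_le_sqrt (le_abs_self (a + b * X ω)), Real.sqrt_nonneg (a + b * X ω)]
    rw [Real.norm_eq_abs, Real.norm_eq_abs, abs_of_nonneg (Real.sqrt_nonneg _),
      abs_of_nonneg (by positivity : (0:ℝ) ≤ |a + b * X ω| + 1)]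
    exact h1
  have hZmint : Integrable (fun ω => a + b * X ω - m) ℙ := hZint.sub (integrable_const m)
  have hA1 : Integrable (fun ω => (a + b * X ω - m) / (2 * Real.sqrt m)) ℙ := hZmint.div_const _
  have hA2 : Integrable (fun ω => Real.sqrt m + (a + b * X ω - m) / (2 * Real.sqrt m)) ℙ :=
    (integrable_const _).add hA1
  set I : ℝ := ∫ ω, Real.sqrt (a + b * X ω) with hI
  have hIub : I ≤ Real.sqrt m := by
    have hmono : I ≤ ∫ ω, (Real.sqrt m + (a + b * X ω - m) / (2 * Real.sqrt m)) := by
      refine integral_mono_ae hsqrt_int hA2 ?_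
      filter_upwards [hZlb] with ω h
      exact sqrt_tangent_upper hm0 (le_trans hz0.le h)
    have hcomp : ∫ ω, (Real.sqrt m + (a + b * X ω - m) / (2 * Real.sqrt m)) = Real.sqrt m := by
      rw [integral_add (integrable_const _) hA1, integral_const, integral_div,
        integral_sub hZint (integrable_const m), integral_const, hZmean]
      simp [measure_univ]
    linarith only [hcomp ▸ hmono]
  have hX2int : Integrable (fun ω => X ω ^ 2) ℙ := hX2.integrable_sq
  have hXsq : ∫ ω, X ω ^ 2
      = (2 * ((n:ℝ) - 1) / (n:ℝ) ^ 2) * σt ^ 4 + ((((n : ℝ) - 1) / n) * σt ^ 2) ^ 2 := by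
    have h := variance_eq_sub hX2
    simp only [Pi.pow_apply] at h
    rw [hXv, hXm] at h
    linarith only [h]
  have hZsqint : Integrable (fun ω => (a + b * X ω - m) ^ 2) ℙ :=
    (hZ2.sub (memLp_const m)).integrable_sq
  have hXcmul : Integrable (fun ω => (2 * (a - m) * b) * X ω) ℙ := hXint.const_mul _
  have hX2cmul : Integrable (fun ω => b ^ 2 * X ω ^ 2) ℙ := hX2int.const_mul _
  have hXsum : Integrable (fun ω => (2 * (a - m) * b) * X ω + b ^ 2 * X ω ^ 2) ℙ :=
    hXcmul.add hX2cmul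
  have hZvar : ∫ ω, (a + b * X ω - m) ^ 2 = 2 * ((n:ℝ) - 1) / (N + n) ^ 2 * σt ^ 4 := by
    calc ∫ ω, (a + b * X ω - m) ^ 2
        = ∫ ω, ((a - m) ^ 2 + ((2 * (a - m) * b) * X ω + b ^ 2 * X ω ^ 2)) := by
          congr 1; funext ω; ring
      _ = (a - m) ^ 2 + ((2 * (a - m) * b) * (∫ ω, X ω) + b ^ 2 * ∫ ω, X ω ^ 2) := by
          rw [integral_add (integrable_const _) hXsum,
            integral_add hXcmul hX2cmul, integral_const, integral_const_mul, integral_const_mul]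
          simp [measure_univ]
      _ = 2 * ((n:ℝ) - 1) / (N + n) ^ 2 * σt ^ 4 := by
          rw [hXm, hXsq, hmdef, hb]
          field_simp
          ring
  have hB1 : Integrable (fun ω => (a + b * X ω - m) ^ 2 / (8 * (z0 * Real.sqrt z0))) ℙ :=
    hZsqint.div_const _
  have hIlb : Real.sqrt m
      - (2 * ((n:ℝ) - 1) / (N + n) ^ 2 * σt ^ 4) / (8 * (z0 * Real.sqrt z0)) ≤ I := by
    have hmono : ∫ ω, (Real.sqrt m + (a + b * X ω - m) / (2 * Real.sqrt m)
        - (a + b * X ω - m) ^ 2 / (8 * (z0 * Real.sqrt z0))) ≤ I := by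
      refine integral_mono_ae (hA2.sub hB1) hsqrt_int ?_
      filter_upwards [hZlb] with ω h
      exact sqrt_tangent_lower hz0 h hz0m
    have hcomp : ∫ ω, (Real.sqrt m + (a + b * X ω - m) / (2 * Real.sqrt m)
        - (a + b * X ω - m) ^ 2 / (8 * (z0 * Real.sqrt z0)))
        = Real.sqrt m
          - (2 * ((n:ℝ) - 1) / (N + n) ^ 2 * σt ^ 4) / (8 * (z0 * Real.sqrt z0)) := by
      rw [integral_sub hA2 hB1, integral_add (integrable_const _) hA1, integral_div,
        integral_div, integral_sub hZint (integrable_const m), integral_const,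
        integral_const, hZmean, hZvar]
      simp [measure_univ]
    linarith only [hcomp ▸ hmono]
  have hQmem : MemLp (fun ω => (c + b * Y ω) - μt) 2 ℙ :=
    ((memLp_const c).add (hY2.const_mul b)).sub (memLp_const μt)
  have hQint : Integrable (fun ω => ((c + b * Y ω) - μt) ^ 2) ℙ := hQmem.integrable_sq
  have hYint : Integrable Y ℙ := hY2.integrable one_le_two
  have hY2int : Integrable (fun ω => Y ω ^ 2) ℙ := hY2.integrable_sq
  have hYsq : ∫ ω, Y ω ^ 2 = σt ^ 2 / n + μt ^ 2 := by
    have h := variance_eq_sub hY2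
    simp only [Pi.pow_apply] at h
    rw [hYv, hYm] at h
    linarith only [h]
  have hYcmul : Integrable (fun ω => (2 * (c - μt) * b) * Y ω) ℙ := hYint.const_mul _
  have hY2cmul : Integrable (fun ω => b ^ 2 * Y ω ^ 2) ℙ := hY2int.const_mul _
  have hYsum : Integrable (fun ω => (2 * (c - μt) * b) * Y ω + b ^ 2 * Y ω ^ 2) ℙ :=
    hYcmul.add hY2cmul
  have hQval : ∫ ω, ((c + b * Y ω) - μt) ^ 2
      = (N / (N + n)) ^ 2 * (μt - μs) ^ 2 + (n:ℝ) / (N + n) ^ 2 * σt ^ 2 := by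
    calc ∫ ω, ((c + b * Y ω) - μt) ^ 2
        = ∫ ω, ((c - μt) ^ 2 + ((2 * (c - μt) * b) * Y ω + b ^ 2 * Y ω ^ 2)) := by
          congr 1; funext ω; ring
      _ = (c - μt) ^ 2 + ((2 * (c - μt) * b) * μt + b ^ 2 * (σt ^ 2 / n + μt ^ 2)) := by
          rw [integral_add (integrable_const _) hYsum,
            integral_add hYcmul hY2cmul, integral_const, integral_const_mul, integral_const_mul,
            hYm, hYsq]
          simp [measure_univ]
      _ = (N / (N + n)) ^ 2 * (μt - μs) ^ 2 + (n:ℝ) / (N + n) ^ 2 * σt ^ 2 := by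
          rw [hc, hb]
          field_simp
          ring
  have hC1 : Integrable (fun ω => σt ^ 2 + (a + b * X ω)) ℙ := (integrable_const _).add hZint
  have hC2 : Integrable (fun ω => 2 * Real.sqrt (a + b * X ω) * σt) ℙ :=
    (hsqrt_int.const_mul 2).mul_const σt
  have hC3 : Integrable (fun ω => σt ^ 2 + (a + b * X ω)
      - 2 * Real.sqrt (a + b * X ω) * σt) ℙ := hC1.sub hC2
  have hfint : Integrable (fun ω => σt ^ 2 + (a + b * X ω)
      - 2 * Real.sqrt (a + b * X ω) * σt + ((c + b * Y ω) - μt) ^ 2) ℙ := hC3.add hQint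
  have hsqrt2 : ∫ ω, 2 * Real.sqrt (a + b * X ω) * σt = 2 * I * σt := by
    rw [integral_mul_const, integral_const_mul]
  have hmain : (∫ ω, (σt ^ 2 + (a + b * X ω)
      - 2 * Real.sqrt (a + b * X ω) * σt + ((c + b * Y ω) - μt) ^ 2))
      = σt ^ 2 + m - 2 * I * σt
        + ((N / (N + n)) ^ 2 * (μt - μs) ^ 2 + (n:ℝ) / (N + n) ^ 2 * σt ^ 2) := by
    rw [integral_add hC3 hQint, integral_sub hC1 hC2,
      integral_add (integrable_const _) hZint, hsqrt2, hZmean, hQval, integral_const]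
    simp [measure_univ]
  have hsm : Real.sqrt m ^ 2 = m := Real.sq_sqrt hm0.le
  have hexp : (σt - Real.sqrt m) ^ 2 = σt ^ 2 - 2 * σt * Real.sqrt m + m := by
    linear_combination hsm
  clear_value a b c z0 m I
  refine ⟨hfint, ?_, ?_⟩
  · rw [hmain]
    nlinarith only [mul_le_mul_of_nonneg_left hIub hσt.le, hexp]
  · rw [hmain]
    have hz0s : 0 < z0 * Real.sqrt z0 := by positivity
    have hrpow : z0 ^ (-(3:ℝ) / 2) = 1 / (z0 * Real.sqrt z0) := by
      rw [show (-(3:ℝ)) / 2 = -((3:ℝ) / 2) by norm_num, Real.rpow_neg hz0.le,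
        show (3:ℝ) / 2 = 1 + 1 / 2 by norm_num, Real.rpow_add hz0, Real.rpow_one,
        ← Real.sqrt_eq_rpow, one_div]
    have heq : σt ^ 5 * (((n:ℝ) - 1) / (2 * (N + n) ^ 2)) * z0 ^ (-(3:ℝ) / 2)
        = 2 * σt * ((2 * ((n:ℝ) - 1) / (N + n) ^ 2 * σt ^ 4) / (8 * (z0 * Real.sqrt z0))) := by
      rw [hrpow]
      field_simp
      ring
    nlinarith only [mul_le_mul_of_nonneg_left hIlb (by positivity : (0:ℝ) ≤ 2 * σt), hexp, heq]


set_option maxHeartbeats 1000000 in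

/-- Multivariate extension of Proposition 1 for Gaussians with diagonal
covariances: the expected multivariate squared Wasserstein-2 distance,
which decomposes as a sum over coordinates of the univariate expressions,
is bounded below by `Σᵢ Lᵢ` and above by `Σᵢ Uᵢ`. -/
theorem multivariate_wasserstein_expected_bounds
    {Ω : Type*} [MeasureSpace Ω] [IsProbabilityMeasure (ℙ : Measure Ω)]
    (D : ℕ) (hD : 1 ≤ D)
    (μs μt σs σt : Fin D → ℝ) (N q : ℝ) (n : ℕ)
    (hσs : ∀ i, 0 < σs i) (hσt : ∀ i, 0 < σt i)
    (hn : 2 ≤ n) (hN : 0 ≤ N) (hq : 0 < q)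
    (μthat σt2hat : Fin D → Ω → ℝ)
    (hμL2 : ∀ i, MemLp (μthat i) 2 ℙ)
    (hμmean : ∀ i, ∫ ω, μthat i ω = μt i)
    (hμvar : ∀ i, variance (μthat i) ℙ = σt i ^ 2 / n)
    (hσL2 : ∀ i, MemLp (σt2hat i) 2 ℙ)
    (hσlb : ∀ i, ∀ᵐ ω ∂(ℙ : Measure Ω), q * σt i ^ 2 / n ≤ σt2hat i ω)
    (hσmean : ∀ i, ∫ ω, σt2hat i ω = (((n : ℝ) - 1) / n) * σt i ^ 2)
    (hσvar : ∀ i, variance (σt2hat i) ℙ = (2 * ((n : ℝ) - 1) / (n : ℝ) ^ 2) * σt i ^ 4) :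
    (∑ i : Fin D,
        ((σt i - Real.sqrt (N / (N + n) * σs i ^ 2 + ((n : ℝ) - 1) / (N + n) * σt i ^ 2)) ^ 2
          + (N / (N + n)) ^ 2 * (μt i - μs i) ^ 2 + (n : ℝ) / (N + n) ^ 2 * σt i ^ 2))
      ≤ ∫ ω, ∑ i : Fin D,
          (σt i ^ 2 + (N / (N + n) * σs i ^ 2 + (n : ℝ) / (N + n) * σt2hat i ω)
            - 2 * Real.sqrt (N / (N + n) * σs i ^ 2 + (n : ℝ) / (N + n) * σt2hat i ω) * σt i
            + ((N / (N + n) * μs i + (n : ℝ) / (N + n) * μthat i ω) - μt i) ^ 2)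
    ∧ ∫ ω, ∑ i : Fin D,
          (σt i ^ 2 + (N / (N + n) * σs i ^ 2 + (n : ℝ) / (N + n) * σt2hat i ω)
            - 2 * Real.sqrt (N / (N + n) * σs i ^ 2 + (n : ℝ) / (N + n) * σt2hat i ω) * σt i
            + ((N / (N + n) * μs i + (n : ℝ) / (N + n) * μthat i ω) - μt i) ^ 2)
      ≤ ∑ i : Fin D,
          (((σt i - Real.sqrt (N / (N + n) * σs i ^ 2 + ((n : ℝ) - 1) / (N + n) * σt i ^ 2)) ^ 2
            + (N / (N + n)) ^ 2 * (μt i - μs i) ^ 2 + (n : ℝ) / (N + n) ^ 2 * σt i ^ 2)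
            + σt i ^ 5 * (((n : ℝ) - 1) / (2 * (N + n) ^ 2))
              * (N / (N + n) * σs i ^ 2 + q / (N + n) * σt i ^ 2) ^ (-(3 : ℝ) / 2)) := by
  have huni := fun i : Fin D => uni_aux (μs i) (μt i) (σs i) (σt i) N q n
    (hσs i) (hσt i) hn hN hq (μthat i) (σt2hat i)
    (hμL2 i) (hμmean i) (hμvar i) (hσL2 i) (hσlb i) (hσmean i) (hσvar i)
  have hsum : ∫ ω, ∑ i : Fin D,
          (σt i ^ 2 + (N / (N + n) * σs i ^ 2 + (n : ℝ) / (N + n) * σt2hat i ω)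
            - 2 * Real.sqrt (N / (N + n) * σs i ^ 2 + (n : ℝ) / (N + n) * σt2hat i ω) * σt i
            + ((N / (N + n) * μs i + (n : ℝ) / (N + n) * μthat i ω) - μt i) ^ 2)
      = ∑ i : Fin D, ∫ ω,
          (σt i ^ 2 + (N / (N + n) * σs i ^ 2 + (n : ℝ) / (N + n) * σt2hat i ω)
            - 2 * Real.sqrt (N / (N + n) * σs i ^ 2 + (n : ℝ) / (N + n) * σt2hat i ω) * σt i
            + ((N / (N + n) * μs i + (n : ℝ) / (N + n) * μthat i ω) - μt i) ^ 2) :=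
    integral_finset_sum Finset.univ (fun i _ => (huni i).1)
  rw [hsum]
  exact ⟨Finset.sum_le_sum fun i _ => (huni i).2.1,
    Finset.sum_le_sum fun i _ => (huni i).2.2⟩
end
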